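/- Let q, k, n, a be positive integers with 1 ≤ q ≤ k-1 and k < n, and suppose ka = n - k + (k²-1)/n (so in particular n divides k²-1). Then (n - q(a+1))² + 4q(k-q) < (n - qn/k + q(k²-1)/(kn) + 2/k)². -/
import Mathlib


/-- Lemma lemka2: if 1 ≤ q ≤ k-1, k < n and ka = n - k + (k²-1)/n, then
(n - q(a+1))² + 4q(k-q) < (n - qn/k + q(k²-1)/(kn) + 2/k)². -/
theorem stmt_3 (q k n a : ℤ) (hq : 1 ≤ q) (hqk : q ≤ k - 1) (hkn : k < n) (ha : 0 < a)
    (hka : (k : ℚ) * a = (n : ℚ) - k + ((k : ℚ) ^ 2 - 1) / n) :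
    ((n : ℚ) - q * (a + 1)) ^ 2 + 4 * q * (k - q) <
      ((n : ℚ) - q * n / k + q * ((k : ℚ) ^ 2 - 1) / (k * n) + 2 / k) ^ 2 := by
  have hqQ : (1:ℚ) ≤ q := by exact_mod_cast hq
  have hqkQ : (q:ℚ) ≤ (k:ℚ) - 1 := by exact_mod_cast hqk
  have hk0 : (0:ℚ) < k := by linarith
  have hn0 : (0:ℚ) < n := by
    have : (k:ℚ) < n := by exact_mod_cast hkn
    linarith
  have hknQ : (k:ℚ) < n := by exact_mod_cast hkn
  have ha' : (a:ℚ) = ((n:ℚ) - k + ((k:ℚ)^2 - 1)/n) / k := by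
    rw [eq_div_iff hk0.ne']
    linear_combination hka
  rw [ha']
  have key : ((n : ℚ) - q * n / k + q * ((k : ℚ) ^ 2 - 1) / (k * n) + 2 / k) ^ 2
      - (((n : ℚ) - q * ((((n:ℚ) - k + ((k:ℚ)^2 - 1)/n) / k) + 1)) ^ 2 + 4 * q * (k - q))
      = (4 * n * ((q*((k:ℚ)^2-1)+n) + ((k:ℚ)-q)*n*((n:ℚ)-q))) / (k^2*n^2) := by
    field_simp
    ring
  have hpos : (0:ℚ) < (4 * n * ((q*((k:ℚ)^2-1)+n) + ((k:ℚ)-q)*n*((n:ℚ)-q))) / (k^2*n^2) := by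
    apply div_pos
    · have hk2 : (0:ℚ) ≤ (k:ℚ)^2 - 1 := by nlinarith
      have h1 : (0:ℚ) < q*((k:ℚ)^2-1)+n := by nlinarith
      have h2 : (0:ℚ) < ((k:ℚ)-q)*n*((n:ℚ)-q) := by
        apply mul_pos (mul_pos (by linarith) hn0) (by linarith)
      nlinarith
    · positivity
  linarith [key, hpos]
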